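/- For Φ(t) = ∫₀ᵗ F(y)/y dy with F(t) = (3/4)(√((9-t)/(1-t)) - 3), the first Taylor coefficient of the composition Φ ∘ φ_R at 0 equals 2(2R+3)/((R+1)(R+2)(R+3)), where φ_R(t) = 1 - 8/((√((9-t)/(1-t)) + 2R)² - 1). -/

import Mathlib

noncomputable def Fgen (t : ℝ) : ℝ :=
  (3 / 4) * (Real.sqrt ((9 - t) / (1 - t)) - 3)

noncomputable def PhiGen (t : ℝ) : ℝ :=
  ∫ y in (0:ℝ)..t, Fgen y / y

noncomputable def psiIter (R : ℕ) (t : ℝ) : ℝ :=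
  1 - 8 / ((Real.sqrt ((9 - t) / (1 - t)) + 2 * R) ^ 2 - 1)

/-- Continuous version of `Fgen y / y` (removable singularity at `0`). -/
noncomputable def gAux (y : ℝ) : ℝ :=
  6 / ((1 - y) * (Real.sqrt ((9 - y) / (1 - y)) + 3))

lemma gAux_continuousAt {y : ℝ} (hy : y < 1) : ContinuousAt gAux y := by
  have h1 : (1 : ℝ) - y ≠ 0 := by linarith
  have hs : ContinuousAt (fun y : ℝ => Real.sqrt ((9 - y) / (1 - y))) y :=
    Real.continuous_sqrt.continuousAt.comp
      (((continuous_const.sub continuous_id).continuousAt).div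
        ((continuous_const.sub continuous_id).continuousAt) h1)
  have hden : ContinuousAt (fun y : ℝ => (1 - y) * (Real.sqrt ((9 - y) / (1 - y)) + 3)) y :=
    ((continuous_const.sub continuous_id).continuousAt).mul (hs.add continuousAt_const)
  have hne : (1 - y) * (Real.sqrt ((9 - y) / (1 - y)) + 3) ≠ 0 := by
    have h2 : 0 ≤ Real.sqrt ((9 - y) / (1 - y)) := Real.sqrt_nonneg _
    have h3 : (0:ℝ) < 1 - y := by linarith
    positivity
  exact continuousAt_const.div hden hne

lemma Fgen_div_eq {y : ℝ} (hy : y < 1) (h0 : y ≠ 0) : Fgen y / y = gAux y := by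
  have h1 : (0:ℝ) < 1 - y := by linarith
  have h9 : (0:ℝ) < 9 - y := by linarith
  unfold Fgen gAux
  set s := Real.sqrt ((9 - y) / (1 - y)) with hsdef
  have hsq : s ^ 2 = (9 - y) / (1 - y) := Real.sq_sqrt (by positivity)
  have h2 : (1 - y) * s ^ 2 = 9 - y := by
    rw [hsq]; field_simp
  have hs3 : s + 3 ≠ 0 := by
    have := Real.sqrt_nonneg ((9 - y) / (1 - y)); rw [← hsdef] at this; linarith
  have h1' : (1:ℝ) - y ≠ 0 := ne_of_gt h1
  rw [div_eq_div_iff h0 (by positivity)]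
  nlinarith [h2]

lemma PhiGen_eq {t : ℝ} (ht : t < 1) : PhiGen t = ∫ y in (0:ℝ)..t, gAux y := by
  unfold PhiGen
  apply intervalIntegral.integral_congr_ae
  have h0 : ∀ᵐ y : ℝ, y ≠ 0 := by
    rw [MeasureTheory.ae_iff]
    simp only [not_not, Set.setOf_eq_eq_singleton]
    exact Real.volume_singleton
  filter_upwards [h0] with y hy0 hyI
  have hy1 : y < 1 := lt_of_le_of_lt hyI.2 (max_lt zero_lt_one ht)
  exact Fgen_div_eq hy1 hy0

/-- The first Taylor coefficient of `Φ ∘ φ_R` at `0`, i.e. the derivative of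
`t ↦ Φ(φ_R(t))` at `0`, equals `2(2R+3)/((R+1)(R+2)(R+3))`. -/
theorem first_coeff_Phi_comp_psi (R : ℕ) :
    deriv (fun t : ℝ => PhiGen (psiIter R t)) 0 =
      2 * (2 * (R:ℝ) + 3) / (((R:ℝ) + 1) * ((R:ℝ) + 2) * ((R:ℝ) + 3)) := by
  have hr : (0:ℝ) ≤ R := Nat.cast_nonneg R
  set x₀ : ℝ := 1 - 2 / (((R:ℝ) + 1) * ((R:ℝ) + 2)) with hx₀def
  have hprod : (0:ℝ) < ((R:ℝ) + 1) * ((R:ℝ) + 2) := by positivity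
  have hx₀0 : 0 ≤ x₀ := by
    rw [hx₀def, sub_nonneg, div_le_one hprod]; nlinarith
  have hx₀1 : x₀ < 1 := by
    rw [hx₀def]
    have : (0:ℝ) < 2 / (((R:ℝ) + 1) * ((R:ℝ) + 2)) := by positivity
    linarith
  have hsqrt9 : Real.sqrt ((9 - (0:ℝ)) / (1 - 0)) = 3 := by
    norm_num
  have hvpos : (0:ℝ) < (3 + 2 * (R:ℝ)) ^ 2 - 1 := by nlinarith
  have hvne : ((3:ℝ) + 2 * (R:ℝ)) ^ 2 - 1 ≠ 0 := ne_of_gt hvpos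
  have hψ0 : psiIter R 0 = x₀ := by
    unfold psiIter
    rw [hsqrt9, hx₀def]
    field_simp
    ring
  -- derivative of the inner map
  have h1 : HasDerivAt (fun t : ℝ => 9 - t) (-1) 0 := (hasDerivAt_id 0).const_sub 9
  have h2 : HasDerivAt (fun t : ℝ => 1 - t) (-1) 0 := (hasDerivAt_id 0).const_sub 1
  have hu : HasDerivAt (fun t : ℝ => (9 - t) / (1 - t)) 8 0 := by
    have := h1.fun_div h2 (by norm_num)
    refine this.congr_deriv ?_
    norm_num
  have hs : HasDerivAt (fun t : ℝ => Real.sqrt ((9 - t) / (1 - t))) (4 / 3) 0 := by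
    have h := hu.sqrt (by norm_num)
    convert h using 1
    rw [show ((9:ℝ) - 0) / (1 - 0) = (9 - (0:ℝ)) / (1 - 0) from rfl, hsqrt9]
    norm_num
  have hv : HasDerivAt
      (fun t : ℝ => (Real.sqrt ((9 - t) / (1 - t)) + 2 * (R:ℝ)) ^ 2 - 1)
      (2 * (3 + 2 * (R:ℝ)) * (4 / 3)) 0 := by
    have h := ((hs.add_const (2 * (R:ℝ))).fun_pow 2).sub_const 1
    refine h.congr_deriv ?_
    rw [hsqrt9]
    push_cast
    ring
  have hvne' : (fun t : ℝ => (Real.sqrt ((9 - t) / (1 - t)) + 2 * (R:ℝ)) ^ 2 - 1) 0 ≠ 0 := by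
    simp only
    rw [hsqrt9]
    exact hvne
  have hψ : HasDerivAt (psiIter R)
      (4 * (2 * (R:ℝ) + 3) / (3 * ((R:ℝ) + 1) ^ 2 * ((R:ℝ) + 2) ^ 2)) 0 := by
    have hd := (hasDerivAt_const (0:ℝ) (8:ℝ)).fun_div hv hvne'
    have h := hd.const_sub 1
    have heq : (fun t : ℝ => 1 - 8 /
        ((Real.sqrt ((9 - t) / (1 - t)) + 2 * (R:ℝ)) ^ 2 - 1)) = psiIter R := by
      funext t; simp [psiIter]
    rw [heq] at h
    refine h.congr_deriv ?_
    rw [hsqrt9]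
    have h4 : ((3:ℝ) + 2 * (R:ℝ)) ^ 2 - 1 = 4 * (((R:ℝ) + 1) * ((R:ℝ) + 2)) := by ring
    field_simp
    ring
  -- FTC for the regularized integral
  have hint : IntervalIntegrable gAux MeasureTheory.volume 0 x₀ := by
    apply ContinuousOn.intervalIntegrable
    intro y hy
    exact (gAux_continuousAt (lt_of_le_of_lt hy.2 (max_lt zero_lt_one hx₀1))).continuousWithinAt
  have hmeas : StronglyMeasurableAtFilter gAux (nhds x₀) MeasureTheory.volume :=
    ContinuousAt.stronglyMeasurableAtFilter isOpen_Iio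
      (fun y hy => gAux_continuousAt hy) x₀ hx₀1
  have hG : HasDerivAt (fun u => ∫ y in (0:ℝ)..u, gAux y) (gAux x₀) (psiIter R 0) := by
    rw [hψ0]
    exact intervalIntegral.integral_hasDerivAt_right hint hmeas (gAux_continuousAt hx₀1)
  have hcomp : HasDerivAt (fun t : ℝ => ∫ y in (0:ℝ)..psiIter R t, gAux y)
      (gAux x₀ * (4 * (2 * (R:ℝ) + 3) / (3 * ((R:ℝ) + 1) ^ 2 * ((R:ℝ) + 2) ^ 2))) 0 :=
    hG.comp 0 hψ
  have hev : (fun t : ℝ => PhiGen (psiIter R t)) =ᶠ[nhds 0]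
      (fun t : ℝ => ∫ y in (0:ℝ)..psiIter R t, gAux y) := by
    have hmem := hψ.continuousAt (Iio_mem_nhds (show psiIter R 0 < 1 from hψ0 ▸ hx₀1))
    filter_upwards [hmem] with t ht
    exact PhiGen_eq ht
  rw [hev.deriv_eq, hcomp.deriv]
  -- compute the value
  have h1x : (1:ℝ) - x₀ = 2 / (((R:ℝ) + 1) * ((R:ℝ) + 2)) := by rw [hx₀def]; ring
  have hfrac : (9 - x₀) / (1 - x₀) = (2 * (R:ℝ) + 3) ^ 2 := by
    rw [hx₀def]
    field_simp
    ring
  have hgx : gAux x₀ = 6 / ((2 / (((R:ℝ) + 1) * ((R:ℝ) + 2))) * (2 * (R:ℝ) + 3 + 3)) := by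
    unfold gAux
    rw [hfrac, Real.sqrt_sq (by positivity), h1x]
  rw [hgx]
  have h3 : (0:ℝ) < (R:ℝ) + 3 := by positivity
  field_simp
  ring
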